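/- Let v_i, v_j, v_k be three noncollinear points in ℝ³, let s be the unit normal s = ((v_j - v_i) × (v_k - v_i)) / ‖(v_j - v_i) × (v_k - v_i)‖, define the conormal vectors n_i = s × (v_k - v_j) and n_j = s × (v_i - v_k), let A = (1/2)·‖(v_j - v_i) × (v_k - v_i)‖ be the area of the triangle, and let θ_k be the interior angle of the triangle at v_k. Then −⟨n_i, n_j⟩ / (4A) = (1/2)·cot θ_k. -/

import Mathlib

open Real InnerProductGeometry

/-- The cross product on `ℝ³ = EuclideanSpace ℝ (Fin 3)`. -/
noncomputable def cross3 (u v : EuclideanSpace ℝ (Fin 3)) : EuclideanSpace ℝ (Fin 3) :=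
  (EuclideanSpace.equiv (Fin 3) ℝ).symm
    (crossProduct ((EuclideanSpace.equiv (Fin 3) ℝ) u) ((EuclideanSpace.equiv (Fin 3) ℝ) v))

lemma inner3 (u v : EuclideanSpace ℝ (Fin 3)) :
    (inner ℝ u v : ℝ) = u 0 * v 0 + u 1 * v 1 + u 2 * v 2 := by
  simp [PiLp.inner_apply, Fin.sum_univ_three, RCLike.inner_apply, mul_comm]

lemma cross3_apply (u v : EuclideanSpace ℝ (Fin 3)) (i : Fin 3) :
    cross3 u v i = ![u 1 * v 2 - u 2 * v 1, u 2 * v 0 - u 0 * v 2, u 0 * v 1 - u 1 * v 0] i := by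
  simp [cross3, cross_apply]

lemma cross3_smul_left (r : ℝ) (u v : EuclideanSpace ℝ (Fin 3)) :
    cross3 (r • u) v = r • cross3 u v := by
  ext i
  fin_cases i <;>
    simp [cross3_apply, PiLp.smul_apply, smul_eq_mul] <;> ring

lemma cross3_neg_right (u v : EuclideanSpace ℝ (Fin 3)) :
    cross3 u (-v) = -cross3 u v := by
  ext i
  fin_cases i <;>
    simp [cross3_apply, PiLp.neg_apply] <;> ring

lemma lagrange3 (a b : EuclideanSpace ℝ (Fin 3)) :
    (inner ℝ (cross3 a b) (cross3 a b) : ℝ) =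
      (inner ℝ a a : ℝ) * (inner ℝ b b : ℝ) - (inner ℝ a b : ℝ) * (inner ℝ a b : ℝ) := by
  simp only [inner3, cross3_apply]
  simp only [Matrix.cons_val_zero, Matrix.cons_val_one, Matrix.head_cons, Matrix.cons_val_two,
    Matrix.tail_cons]
  ring

lemma key3 (a b : EuclideanSpace ℝ (Fin 3)) :
    (inner ℝ (cross3 (cross3 a b) b) (cross3 (cross3 a b) a) : ℝ) =
      (inner ℝ (cross3 a b) (cross3 a b) : ℝ) * (inner ℝ a b : ℝ) := by
  simp only [inner3, cross3_apply]
  simp only [Matrix.cons_val_zero, Matrix.cons_val_one, Matrix.head_cons, Matrix.cons_val_two,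
    Matrix.tail_cons]
  ring

/-- For a noncollinear triangle `[vᵢ, vⱼ, vₖ]` in `ℝ³` with unit normal `s`, conormal
vectors `nᵢ = s × (vₖ - vⱼ)`, `nⱼ = s × (vᵢ - vₖ)`, and area `A`, one has
`-⟨nᵢ, nⱼ⟩ / (4A) = (1/2)·cot θₖ` where `θₖ` is the interior angle at `vₖ`. -/
theorem cotangent_weight_eq_neg_inner_conormal (vi vj vk : EuclideanSpace ℝ (Fin 3))
    (h : ¬ Collinear ℝ ({vi, vj, vk} : Set (EuclideanSpace ℝ (Fin 3)))) :
    let s := ‖cross3 (vj - vi) (vk - vi)‖⁻¹ • cross3 (vj - vi) (vk - vi)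
    let ni := cross3 s (vk - vj)
    let nj := cross3 s (vi - vk)
    let A := (1/2 : ℝ) * ‖cross3 (vj - vi) (vk - vi)‖;
    -(inner ℝ ni nj : ℝ) / (4 * A) =
      (1/2 : ℝ) * Real.cot (angle (vi - vk) (vj - vk)) := by
  intro s ni nj A
  set a : EuclideanSpace ℝ (Fin 3) := vi - vk with ha
  set b : EuclideanSpace ℝ (Fin 3) := vj - vk with hb
  -- rewrite the main cross product
  have hab : cross3 (vj - vi) (vk - vi) = cross3 a b := by
    ext i
    fin_cases i <;>
      simp [cross3_apply, ha, hb, PiLp.sub_apply] <;> ring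
  set c : EuclideanSpace ℝ (Fin 3) := cross3 a b with hc
  set N : ℝ := ‖c‖ with hN
  -- nondegeneracy from noncollinearity
  have h' : ¬ Collinear ℝ ({vi, vk, vj} : Set (EuclideanSpace ℝ (Fin 3))) := by
    have hset : ({vi, vk, vj} : Set (EuclideanSpace ℝ (Fin 3))) = {vi, vj, vk} := by
      ext x; simp; tauto
    rw [hset]; exact h
  have hvik : vi ≠ vk := ne₁₂_of_not_collinear h'
  have hvjk : vj ≠ vk := ne₂₃_of_not_collinear h' |>.symm
  have ha0 : a ≠ 0 := sub_ne_zero.mpr hvik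
  have hb0 : b ≠ 0 := sub_ne_zero.mpr hvjk
  have hsin : 0 < Real.sin (angle a b) := by
    have := EuclideanGeometry.sin_pos_of_not_collinear h'
    simpa [EuclideanGeometry.angle, vsub_eq_sub, ha, hb] using this
  have hsinN : Real.sin (angle a b) * (‖a‖ * ‖b‖) = N := by
    rw [sin_angle_mul_norm_mul_norm, hN, hc]
    rw [show ‖cross3 a b‖ = √(‖cross3 a b‖ ^ 2) by rw [Real.sqrt_sq (norm_nonneg _)]]
    congr 1
    rw [← real_inner_self_eq_norm_sq, lagrange3]
  have hNpos : 0 < N := by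
    rw [← hsinN]
    exact mul_pos hsin (mul_pos (norm_pos_iff.mpr ha0) (norm_pos_iff.mpr hb0))
  have hNne : N ≠ 0 := hNpos.ne'
  have habne : ‖a‖ * ‖b‖ ≠ 0 :=
    mul_ne_zero (norm_ne_zero_iff.mpr ha0) (norm_ne_zero_iff.mpr hb0)
  -- compute the inner product of conormals
  have hkj : vk - vj = -b := by rw [hb]; abel
  have hinner : (inner ℝ ni nj : ℝ) = -(inner ℝ a b : ℝ) := by
    show (inner ℝ (cross3 s (vk - vj)) (cross3 s (vi - vk)) : ℝ) = _
    rw [hkj, show vi - vk = a from rfl]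
    have hs : s = N⁻¹ • c := by
      show ‖cross3 (vj - vi) (vk - vi)‖⁻¹ • cross3 (vj - vi) (vk - vi) = N⁻¹ • c
      rw [hab]
    rw [hs, cross3_smul_left, cross3_smul_left, cross3_neg_right,
      real_inner_smul_left, real_inner_smul_right, inner_neg_left, key3,
      real_inner_self_eq_norm_sq]
    field_simp
    ring
  -- put it together
  have hA : A = (1/2 : ℝ) * N := by
    show (1/2 : ℝ) * ‖cross3 (vj - vi) (vk - vi)‖ = _
    rw [hab]
  rw [hinner, hA, Real.cot_eq_cos_div_sin, cos_angle]
  have hsinv : Real.sin (angle a b) = N / (‖a‖ * ‖b‖) := by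
    field_simp [← hsinN]
    linarith [hsinN]
  rw [hsinv]
  field_simp
  ring
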